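/- Let α be irrational with continued fraction convergents p_k/q_k. If m is an integer with q_k ≤ |m| < q_{k+1} and q_k does not divide m, then ‖mα‖ ≥ 1/(2|m|), where ‖θ‖ denotes the distance from θ to the nearest integer. -/

import Mathlib

/-- Distance from a real number to the nearest integer. -/
noncomputable def distInt (θ : ℝ) : ℝ := |θ - round θ|

open GenContFract


private lemma cf_not_term (α : ℝ) (hα : Irrational α) (n : ℕ) :
    ¬(GenContFract.of α).TerminatedAt n := by
  intro h
  have ht : (GenContFract.of α).Terminates := ⟨n, h⟩
  obtain ⟨qq, hqq⟩ := (GenContFract.terminates_iff_rat α).mp ht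
  exact hα ⟨qq, hqq.symm⟩

private lemma cf_dens_ge_one (α : ℝ) (hα : Irrational α) (n : ℕ) :
    (1 : ℝ) ≤ (GenContFract.of α).dens n := by
  have h := GenContFract.succ_nth_fib_le_of_nth_den (v := α) (n := n)
    (Or.inr (cf_not_term α hα _))
  refine le_trans ?_ h
  have : 0 < Nat.fib (n + 1) := Nat.fib_pos.mpr n.succ_pos
  exact_mod_cast this

private lemma cf_dens_mono (α : ℝ) : Monotone fun n => (GenContFract.of α).dens n :=
  monotone_nat_of_le_succ fun _ => GenContFract.of_den_mono

private lemma cf_int (α : ℝ) (hα : Irrational α) (n : ℕ) :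
    (∃ a : ℤ, (GenContFract.of α).nums n = (a : ℝ)) ∧
      (∃ b : ℤ, (GenContFract.of α).dens n = (b : ℝ)) := by
  set g := GenContFract.of α with hg
  have key : ∀ n : ℕ,
      ((∃ a : ℤ, g.nums n = (a : ℝ)) ∧ (∃ b : ℤ, g.dens n = (b : ℝ))) ∧
      ((∃ a : ℤ, g.nums (n+1) = (a : ℝ)) ∧ (∃ b : ℤ, g.dens (n+1) = (b : ℝ))) := by
    intro n
    induction n with
    | zero =>
      obtain ⟨gp, hs⟩ : ∃ gp, g.s.get? 0 = some gp :=
        Option.ne_none_iff_exists'.1 (cf_not_term α hα 0)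
      obtain ⟨ha1, z, hz⟩ := GenContFract.of_partNum_eq_one_and_exists_int_partDen_eq hs
      refine ⟨⟨⟨⌊α⌋, ?_⟩, ⟨1, ?_⟩⟩, ⟨⟨z * ⌊α⌋ + 1, ?_⟩, ⟨z, ?_⟩⟩⟩
      · rw [g.zeroth_num_eq_h, hg, GenContFract.of_h_eq_floor]
      · rw [g.zeroth_den_eq_one]; norm_num
      · rw [GenContFract.first_num_eq hs, ha1, hz, hg, GenContFract.of_h_eq_floor]
        push_cast; ring
      · rw [GenContFract.first_den_eq hs, hz]
    | succ n ih =>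
      obtain ⟨⟨a, hA⟩, ⟨b, hB⟩⟩ := ih.1
      obtain ⟨⟨a', hA'⟩, ⟨b', hB'⟩⟩ := ih.2
      obtain ⟨gp, hs⟩ : ∃ gp, g.s.get? (n + 1) = some gp :=
        Option.ne_none_iff_exists'.1 (cf_not_term α hα (n + 1))
      obtain ⟨ha1, z, hz⟩ := GenContFract.of_partNum_eq_one_and_exists_int_partDen_eq hs
      refine ⟨ih.2, ⟨⟨z * a' + a, ?_⟩, ⟨z * b' + b, ?_⟩⟩⟩
      · rw [GenContFract.nums_recurrence hs hA hA', ha1, hz]; push_cast; ring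
      · rw [GenContFract.dens_recurrence hs hB hB', ha1, hz]; push_cast; ring
  exact (key n).1

private lemma cf_det (α : ℝ) (hα : Irrational α) (n : ℕ) :
    (GenContFract.of α).nums n * (GenContFract.of α).dens (n+1)
      - (GenContFract.of α).dens n * (GenContFract.of α).nums (n+1) = (-1 : ℝ)^(n+1) :=
  SimpContFract.determinant (s := SimpContFract.of α) (cf_not_term α hα n)

private lemma cf_lower (α : ℝ) (hα : Irrational α) (n : ℕ) :
    ∃ bb : ℝ, 1 ≤ bb ∧
      (GenContFract.of α).dens (n+2) = bb * (GenContFract.of α).dens (n+1)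
        + (GenContFract.of α).dens n ∧
      bb / (GenContFract.of α).dens (n+2)
        ≤ |(GenContFract.of α).dens n * α - (GenContFract.of α).nums n| := by
  set g := GenContFract.of α with hg
  obtain ⟨gp, hs⟩ : ∃ gp, g.s.get? (n + 1) = some gp :=
    Option.ne_none_iff_exists'.1 (cf_not_term α hα (n + 1))
  have ha1 : gp.a = 1 := GenContFract.of_partNum_eq_one (GenContFract.partNum_eq_s_a hs)
  have hb1 : 1 ≤ gp.b := GenContFract.of_one_le_get?_partDen (GenContFract.partDen_eq_s_b hs)
  have hrec : g.dens (n + 2) = gp.b * g.dens (n + 1) + g.dens n := by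
    rw [GenContFract.dens_recurrence hs rfl rfl, ha1, one_mul]
  refine ⟨gp.b, hb1, hrec, ?_⟩
  set Bn := g.dens n
  set Bn1 := g.dens (n + 1)
  set Bn2 := g.dens (n + 2)
  set An := g.nums n
  set An1 := g.nums (n + 1)
  have hBn : (1 : ℝ) ≤ Bn := cf_dens_ge_one α hα n
  have hBn1 : (1 : ℝ) ≤ Bn1 := cf_dens_ge_one α hα (n + 1)
  have hBn2 : (1 : ℝ) ≤ Bn2 := cf_dens_ge_one α hα (n + 2)
  have hub : |α - g.convs (n + 1)| ≤ 1 / (Bn1 * Bn2) :=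
    GenContFract.abs_sub_convs_le (cf_not_term α hα (n + 1))
  have hconv : g.convs (n + 1) = An1 / Bn1 := GenContFract.conv_eq_num_div_den
  -- |Bn1 * α - An1| * Bn2 ≤ 1
  have hu : |Bn1 * α - An1| * Bn2 ≤ 1 := by
    have h1 : Bn1 * α - An1 = Bn1 * (α - An1 / Bn1) := by
      field_simp
    have h2 : |Bn1 * α - An1| = Bn1 * |α - An1 / Bn1| := by
      rw [h1, abs_mul, abs_of_pos (by linarith : (0:ℝ) < Bn1)]
    rw [h2, hconv] at *
    calc Bn1 * |α - An1 / Bn1| * Bn2 ≤ Bn1 * (1 / (Bn1 * Bn2)) * Bn2 := by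
          have := mul_le_mul_of_nonneg_left hub (by linarith : (0:ℝ) ≤ Bn1)
          exact mul_le_mul_of_nonneg_right this (by linarith)
      _ = 1 := by field_simp
  -- determinant
  have hdet : An * Bn1 - Bn * An1 = (-1 : ℝ) ^ (n + 1) := cf_det α hα n
  have key : (1 : ℝ) ≤ Bn * |Bn1 * α - An1| + Bn1 * |Bn * α - An| := by
    have hident : Bn * (Bn1 * α - An1) - Bn1 * (Bn * α - An) = An * Bn1 - Bn * An1 := by ring
    have h1 : |Bn * (Bn1 * α - An1) - Bn1 * (Bn * α - An)| = 1 := by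
      rw [hident, hdet, abs_pow, abs_neg, abs_one, one_pow]
    calc (1:ℝ) = |Bn * (Bn1 * α - An1) - Bn1 * (Bn * α - An)| := h1.symm
      _ ≤ |Bn * (Bn1 * α - An1)| + |Bn1 * (Bn * α - An)| := abs_sub _ _
      _ = Bn * |Bn1 * α - An1| + Bn1 * |Bn * α - An| := by
          rw [abs_mul, abs_mul, abs_of_pos (by linarith : (0:ℝ) < Bn),
            abs_of_pos (by linarith : (0:ℝ) < Bn1)]
  -- conclude
  rw [div_le_iff₀ (by linarith : (0:ℝ) < Bn2)]
  set d := |Bn * α - An|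
  set u := |Bn1 * α - An1|
  have hd : 0 ≤ d := abs_nonneg _
  have hu0 : 0 ≤ u := abs_nonneg _
  nlinarith [mul_le_mul_of_nonneg_right key (by linarith : (0:ℝ) ≤ Bn2),
    mul_le_mul_of_nonneg_left hu (by linarith : (0:ℝ) ≤ Bn),
    mul_le_mul_of_nonneg_right (le_of_eq hrec) (by linarith : (0:ℝ) ≤ d),
    mul_nonneg (mul_nonneg hd (by linarith : (0:ℝ) ≤ Bn2)) (by linarith : (0:ℝ) ≤ Bn1 - 1)]

/-- If `q_k ≤ |m| < q_{k+1}` and `q_k ∤ m`, where `q_k` are the continued fraction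
convergent denominators of the irrational `α`, then `‖mα‖ ≥ 1/(2|m|)`. -/
theorem nonresonant_freq_lower_bound (α : ℝ) (hα : Irrational α)
    (q : ℕ → ℕ) (hq : ∀ j, (q j : ℝ) = (GenContFract.of α).dens j)
    (k : ℕ) (m : ℤ)
    (hm₁ : (q k : ℤ) ≤ |m|) (hm₂ : |m| < (q (k + 1) : ℤ))
    (hdvd : ¬ ((q k : ℤ) ∣ m)) :
    distInt (m * α) ≥ 1 / (2 * |(m : ℝ)|) := by
  by_contra hcon
  push_neg at hcon
  unfold distInt at hcon
  set g := GenContFract.of α with hg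
  have hm0 : m ≠ 0 := by rintro rfl; exact hdvd (dvd_zero _)
  have hM0 : (0 : ℝ) < |(m : ℝ)| := abs_pos.mpr (Int.cast_ne_zero.mpr hm0)
  set M : ℝ := |(m : ℝ)| with hM
  set p : ℤ := round ((m : ℝ) * α) with hp
  have hsmall : |(m : ℝ) * α - p| < 1 / (2 * M) := hcon
  -- build the rational approximation
  set r : ℚ := (p : ℚ) / (m : ℚ) with hr
  have hden_dvd : (r.den : ℤ) ∣ m := by
    rw [hr, ← Rat.divInt_eq_div]; exact Rat.den_dvd p m
  have hden_le : (r.den : ℤ) ≤ |m| :=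
    Int.le_of_dvd (abs_pos.mpr hm0) ((dvd_abs _ _).mpr hden_dvd)
  have hdenM : (r.den : ℝ) ≤ M := by
    rw [hM, ← Int.cast_abs]; exact_mod_cast hden_le
  have hden1 : (1 : ℝ) ≤ (r.den : ℝ) := by exact_mod_cast r.pos
  have hrcast : (r : ℝ) = (p : ℝ) / (m : ℝ) := by rw [hr]; push_cast; ring
  have hmne : (m : ℝ) ≠ 0 := Int.cast_ne_zero.mpr hm0
  have hαr : |α - r| = |(m : ℝ) * α - p| / M := by
    rw [hrcast, hM, ← abs_div]
    congr 1
    field_simp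
  have hlt : |α - r| < 1 / (2 * (r.den : ℝ) ^ 2) := by
    rw [hαr]
    calc |(m : ℝ) * α - p| / M < (1 / (2 * M)) / M := by gcongr
      _ = 1 / (2 * M ^ 2) := by field_simp
      _ ≤ 1 / (2 * (r.den : ℝ) ^ 2) := by
          apply one_div_le_one_div_of_le (by positivity)
          nlinarith
  obtain ⟨n, hn⟩ := Real.exists_rat_eq_convergent hlt
  have hc : g.convs n = (r : ℝ) := by rw [hg, Real.convs_eq_convergent α n, hn]
  obtain ⟨⟨a, hA⟩, ⟨b, hB⟩⟩ := cf_int α hα n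
  obtain ⟨⟨a', hA'⟩, ⟨b', hB'⟩⟩ := cf_int α hα (n + 1)
  have hb1 : (1 : ℤ) ≤ b := by
    have := cf_dens_ge_one α hα n; rw [hB] at this; exact_mod_cast this
  have hbZ : b ≠ 0 := by omega
  have hbne : (b : ℝ) ≠ 0 := Int.cast_ne_zero.mpr hbZ
  -- coprimality
  have hdetZ : a * b' - b * a' = (-1 : ℤ) ^ (n + 1) := by
    have h := cf_det α hα n
    rw [hA, hB, hA', hB'] at h
    exact_mod_cast h
  have hcop : IsCoprime (b : ℤ) a := by
    refine ⟨-((-1 : ℤ) ^ (n + 1) * a'), (-1 : ℤ) ^ (n + 1) * b', ?_⟩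
    have he : ((-1 : ℤ) ^ (n + 1)) * ((-1 : ℤ) ^ (n + 1)) = 1 := by
      rw [← pow_add]; exact Even.neg_one_pow ⟨n + 1, by ring⟩
    calc -((-1:ℤ)^(n+1) * a') * b + (-1:ℤ)^(n+1) * b' * a
        = (-1:ℤ)^(n+1) * (a * b' - b * a') := by ring
      _ = 1 := by rw [hdetZ, he]
  -- p * b = a * m
  have hcross : p * b = a * m := by
    have h1 : (p : ℝ) / (m : ℝ) = (a : ℝ) / (b : ℝ) := by
      rw [← hrcast, ← hc, hg, GenContFract.conv_eq_num_div_den, ← hg, hA, hB]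
    rw [div_eq_div_iff hmne hbne] at h1
    exact_mod_cast h1
  have hbdvd : b ∣ m := hcop.dvd_of_dvd_mul_left ⟨p, by linarith [hcross]⟩
  have hqn : (q n : ℤ) = b := by
    have : ((q n : ℤ) : ℝ) = (b : ℝ) := by push_cast; rw [hq n]; exact hB
    exact_mod_cast this
  rcases lt_trichotomy n k with hnk | hnk | hnk
  · -- n < k : main estimate
    obtain ⟨c, hmc⟩ := hbdvd
    have hc0 : c ≠ 0 := by rintro rfl; simp at hmc; exact hm0 hmc
    have hpa : p = a * c := by
      have : p * b = (a * c) * b := by rw [hcross, hmc]; ring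
      exact mul_right_cancel₀ hbZ this
    have hdelta : (m : ℝ) * α - p = (c : ℝ) * ((b : ℝ) * α - a) := by
      rw [hmc, hpa]; push_cast; ring
    have hc1 : (1 : ℝ) ≤ |(c : ℝ)| := by
      rw [← Int.cast_abs]; exact_mod_cast Int.one_le_abs (by exact_mod_cast hc0)
    have hge : |(b : ℝ) * α - a| ≤ |(m : ℝ) * α - p| := by
      rw [hdelta, abs_mul]
      nlinarith [abs_nonneg ((b : ℝ) * α - (a : ℝ))]
    obtain ⟨bb, hbb1, hbbrec, hbblow⟩ := cf_lower α hα n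
    rw [← hg] at hbbrec hbblow
    rw [hB, hA] at hbblow
    -- dens bounds
    have hdkM : g.dens k ≤ M := by
      rw [← hq k, hM, ← Int.cast_abs]; exact_mod_cast hm₁
    have hd1 : g.dens (n + 1) ≤ M := le_trans (cf_dens_mono α (by omega : n + 1 ≤ k)) hdkM
    have hd0 : g.dens n ≤ M := le_trans (cf_dens_mono α (by omega : n ≤ k)) hdkM
    have hD1 : (1 : ℝ) ≤ g.dens (n + 2) := cf_dens_ge_one α hα (n + 2)
    have hfinal : 1 / (2 * M) ≤ bb / g.dens (n + 2) := by
      rw [div_le_div_iff₀ (by linarith) (by linarith)]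
      nlinarith
    linarith [hfinal.trans (hbblow.trans hge)]
  · exact hdvd (by rw [← hnk, hqn]; exact hbdvd)
  · -- n > k
    have h1 : (q (k + 1) : ℤ) ≤ (q n : ℤ) := by
      have : (q (k+1) : ℝ) ≤ (q n : ℝ) := by
        rw [hq, hq]; exact cf_dens_mono α (by omega)
      exact_mod_cast this
    have h2 : (q n : ℤ) ≤ |m| := by
      rw [hqn]; exact Int.le_of_dvd (abs_pos.mpr hm0) ((dvd_abs _ _).mpr hbdvd)
    omega
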